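/- Fix integers q ≥ 2 and n ≥ 1 and define the Krawtchouk values K_j(i) := Σ_{k=0}^{j} (−1)^k C(i,k) C(n−i, j−k) (q−1)^{j−k}. Then for every finite set C of words u : {1,…,n} → {0,…,q−1} and every j = 0, …, n: Σ_{u ∈ C} Σ_{v ∈ C} K_j(d(u,v)) ≥ 0, where d denotes Hamming distance. Equivalently, for nonempty C the distance distribution x_i := |{(u,v) ∈ C×C : d(u,v) = i}| / |C| satisfies Σ_{i=0}^{n} x_i·K_j(i) ≥ 0 for all j. -/

import Mathlib

/-- The Krawtchouk value `K_j(i) = Σ_{k=0}^{j} (−1)^k C(i,k) C(n−i, j−k) (q−1)^{j−k}`. -/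
def krawtchouk (q n j i : ℕ) : ℝ :=
  ∑ k ∈ Finset.range (j + 1),
    (-1 : ℝ) ^ k * (i.choose k : ℝ) * ((n - i).choose (j - k) : ℝ) * ((q : ℝ) - 1) ^ (j - k)

open Finset Polynomial Complex


noncomputable def zet (q : ℕ) : ℂ := Complex.exp (2 * Real.pi * Complex.I / q)

lemma zet_ne_zero (q : ℕ) : zet q ≠ 0 := Complex.exp_ne_zero _

lemma zet_prim (q : ℕ) (hq : 2 ≤ q) : IsPrimitiveRoot (zet q) q :=
  Complex.isPrimitiveRoot_exp q (by omega)

lemma conj_zet (q : ℕ) : (starRingEnd ℂ) (zet q) = (zet q)⁻¹ := by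
  unfold zet
  rw [← Complex.exp_conj, ← Complex.exp_neg]
  congr 1
  simp only [map_div₀, map_mul, Complex.conj_I, Complex.conj_ofReal, map_natCast,
    map_ofNat]
  ring

lemma geom_zero (q : ℕ) (hq : 2 ≤ q) (c : ℤ) (hc : ¬ (q : ℤ) ∣ c) :
    ∑ a : Fin q, zet q ^ (c * (a : ℕ)) = 0 := by
  have hw1 : zet q ^ c ≠ 1 := by
    intro h
    exact hc (((zet_prim q hq).zpow_eq_one_iff_dvd c).mp h)
  have hwq : (zet q ^ c) ^ q = 1 := by
    rw [← zpow_natCast (zet q ^ c) q, ← zpow_mul, mul_comm, zpow_mul,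
      zpow_natCast, (zet_prim q hq).pow_eq_one, one_zpow]
  have : ∀ a : Fin q, zet q ^ (c * (a : ℕ)) = (zet q ^ c) ^ (a : ℕ) := by
    intro a
    rw [← zpow_natCast (zet q ^ c) (a : ℕ), ← zpow_mul]
  simp_rw [this]
  rw [Fin.sum_univ_eq_sum_range (fun i => (zet q ^ c) ^ i) q,
    geom_sum_eq hw1, hwq]
  simp

lemma binom (c : ℂ) (m k : ℕ) :
    (((1 : ℂ[X]) + C c * X) ^ m).coeff k = (m.choose k : ℂ) * c ^ k := by
  have hexp : ((1 : ℂ[X]) + C c * X) ^ m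
      = ∑ r ∈ Finset.range (m + 1), C (c ^ r * (m.choose r : ℂ)) * X ^ r := by
    rw [add_comm, add_pow]
    refine Finset.sum_congr rfl fun r _ => ?_
    simp only [one_pow, mul_one, mul_pow, ← C_pow, C_mul]
    rw [show ((m.choose r : ℕ) : ℂ[X]) = C ((m.choose r : ℕ) : ℂ) from by norm_cast]
    ring
  rw [hexp, finset_sum_coeff]
  simp only [coeff_C_mul, coeff_X_pow, mul_ite, mul_one, mul_zero]
  rw [Finset.sum_ite_eq (Finset.range (m + 1)) k fun r => c ^ r * (m.choose r : ℂ)]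
  by_cases hk : k ≤ m
  · simp [Finset.mem_range, Nat.lt_succ_iff, hk, mul_comm]
  · rw [if_neg (by simp [Finset.mem_range]; omega), Nat.choose_eq_zero_of_lt (by omega)]
    simp

lemma key (q n : ℕ) (hq : 2 ≤ q) (u v : Fin n → Fin q) (j : ℕ) :
    ∑ z ∈ Finset.univ.filter (fun z : Fin n → Fin q =>
        (Finset.univ.filter fun h => (z h : ℕ) ≠ 0).card = j),
      ∏ h, zet q ^ (((u h : ℤ) - (v h : ℤ)) * ((z h : ℕ) : ℤ)) =
    ((krawtchouk q n j (hammingDist u v) : ℝ) : ℂ) := by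
  haveI : NeZero q := ⟨by omega⟩
  set c : Fin n → ℤ := fun h => (u h : ℤ) - (v h : ℤ) with hcdef
  set i := hammingDist u v with hidef
  have hval0 : ∀ a : Fin q, (a : ℕ) = 0 ↔ a = 0 :=
    fun a => ⟨fun h => Fin.ext (by simp [h]), fun h => by simp [h]⟩
  have hc0 : ∀ h, c h = 0 ↔ u h = v h := by
    intro h
    constructor
    · intro hh
      simp only [hcdef, sub_eq_zero] at hh
      exact Fin.val_injective (by exact_mod_cast hh)
    · intro hh; simp [hcdef, hh]
  have hcq : ∀ h, c h ≠ 0 → ¬ (q : ℤ) ∣ c h := by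
    intro h h0 hdvd
    have h1 : (u h : ℤ) < q := by exact_mod_cast (u h).isLt
    have h2 : (v h : ℤ) < q := by exact_mod_cast (v h).isLt
    have h3 : (0:ℤ) ≤ (u h : ℤ) := by positivity
    have h4 : (0:ℤ) ≤ (v h : ℤ) := by positivity
    obtain ⟨k, hk⟩ := hdvd
    have hb : -(q:ℤ) < c h ∧ c h < q := by constructor <;> simp [hcdef] <;> omega
    rcases lt_trichotomy k 0 with hneg | hz | hpos
    · nlinarith [hb.1, hb.2]
    · exact h0 (by simp [hk, hz])
    · nlinarith [hb.1, hb.2]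
  have hs : ∀ h : Fin n, (∑ a ∈ Finset.univ.erase (0 : Fin q), zet q ^ (c h * (a : ℕ)))
      = if u h = v h then ((q : ℂ) - 1) else -1 := by
    intro h
    by_cases he : u h = v h
    · have h0 : c h = 0 := (hc0 h).mpr he
      rw [if_pos he]
      have : ∀ a ∈ Finset.univ.erase (0 : Fin q), zet q ^ (c h * (a : ℕ)) = 1 := by
        intro a _; simp [h0]
      rw [Finset.sum_congr rfl this, Finset.sum_const, Finset.card_erase_of_mem (mem_univ _),
        Finset.card_univ, Fintype.card_fin]
      simp
      rw [Nat.cast_sub (by omega)]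
      simp
    · have h0 : c h ≠ 0 := fun hh => he ((hc0 h).mp hh)
      have hg := geom_zero q hq (c h) (hcq h h0)
      rw [← Finset.add_sum_erase _ _ (mem_univ (0 : Fin q))] at hg
      simp only [Fin.val_zero, Nat.cast_zero, mul_zero, zpow_zero] at hg
      rw [if_neg he]
      linear_combination hg
  set s : Fin n → ℂ := fun h => if u h = v h then ((q : ℂ) - 1) else -1 with hsdef
  have hP : ∏ h, ((1 : ℂ[X]) + C (s h) * X)
      = ∑ z : Fin n → Fin q, C (∏ h, zet q ^ (c h * (z h : ℕ)))
          * X ^ ((Finset.univ.filter fun h => (z h : ℕ) ≠ 0).card) := by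
    have hfac : ∀ h, (1 : ℂ[X]) + C (s h) * X
        = ∑ a : Fin q, (if (a : ℕ) = 0 then 1 else C (zet q ^ (c h * (a : ℕ))) * X) := by
      intro h
      rw [← Finset.add_sum_erase _ _ (mem_univ (0 : Fin q))]
      have hz : (((0 : Fin q) : ℕ) = 0) := Fin.val_zero q
      rw [if_pos hz]
      congr 1
      rw [Finset.sum_congr rfl (fun a ha => if_neg (fun hh =>
        (Finset.ne_of_mem_erase ha) ((hval0 a).mp hh)))]
      rw [← Finset.sum_mul, ← map_sum, hs h]
    simp_rw [hfac]
    rw [Finset.prod_univ_sum]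
    rw [Fintype.piFinset_univ]
    refine Finset.sum_congr rfl fun z _ => ?_
    have hterm : ∀ h, (if ((z h : ℕ) = 0) then (1 : ℂ[X]) else C (zet q ^ (c h * (z h : ℕ))) * X)
        = C (zet q ^ (c h * (z h : ℕ))) * X ^ (if (z h : ℕ) = 0 then 0 else 1) := by
      intro h; by_cases h0 : (z h : ℕ) = 0 <;> simp [h0]
    simp_rw [hterm]
    rw [Finset.prod_mul_distrib, ← map_prod, Finset.prod_pow_eq_pow_sum]
    have hw : (∑ h : Fin n, if (z h : ℕ) = 0 then 0 else 1)
        = (Finset.univ.filter fun h => (z h : ℕ) ≠ 0).card := by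
      rw [Finset.card_filter]
      refine Finset.sum_congr rfl fun h _ => ?_
      by_cases h0 : (z h : ℕ) = 0 <;> simp [h0]
    rw [hw]
  have hcoe : (∑ z ∈ Finset.univ.filter (fun z : Fin n → Fin q =>
        (Finset.univ.filter fun h => (z h : ℕ) ≠ 0).card = j),
      ∏ h, zet q ^ (c h * ((z h : ℕ) : ℤ)))
      = (∏ h, ((1 : ℂ[X]) + C (s h) * X)).coeff j := by
    rw [hP, finset_sum_coeff]
    simp only [coeff_C_mul, coeff_X_pow, mul_ite, mul_one, mul_zero]
    rw [Finset.sum_filter]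
    refine Finset.sum_congr rfl fun z _ => ?_
    by_cases hz : (Finset.univ.filter fun h => (z h : ℕ) ≠ 0).card = j
    · rw [if_pos hz, if_pos hz.symm]
    · rw [if_neg hz, if_neg (Ne.symm hz)]
  have hsplit : ∏ h, ((1 : ℂ[X]) + C (s h) * X)
      = ((1 : ℂ[X]) + C (-1) * X) ^ i * ((1 : ℂ[X]) + C ((q : ℂ) - 1) * X) ^ (n - i) := by
    have hh : ∀ h, (1 : ℂ[X]) + C (s h) * X
        = if u h = v h then ((1 : ℂ[X]) + C ((q : ℂ) - 1) * X) else ((1 : ℂ[X]) + C (-1) * X) := by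
      intro h; by_cases he : u h = v h <;> simp [hsdef, he]
    simp_rw [hh]
    rw [Finset.prod_ite, Finset.prod_const, Finset.prod_const]
    have h1 : (Finset.univ.filter fun h => ¬ u h = v h).card = i := rfl
    have h2 : (Finset.univ.filter fun h => u h = v h).card = n - i := by
      have h3 := Finset.card_filter_add_card_filter_not (s := (Finset.univ : Finset (Fin n)))
        (p := fun h => u h = v h)
      rw [Finset.card_univ, Fintype.card_fin] at h3
      omega
    rw [h1, h2, mul_comm]
  have hcoeff2 : (((1 : ℂ[X]) + C (-1) * X) ^ i * ((1 : ℂ[X]) + C ((q : ℂ) - 1) * X) ^ (n - i)).coeff j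
      = ((krawtchouk q n j i : ℝ) : ℂ) := by
    rw [coeff_mul, Finset.Nat.sum_antidiagonal_eq_sum_range_succ_mk]
    unfold krawtchouk
    push_cast
    refine Finset.sum_congr rfl fun k hk => ?_
    rw [binom, binom]
    push_cast
    ring
  rw [hcoe, hsplit, hcoeff2]

/-- for every finite code `C` and every `j = 0,…,n` one has
`Σ_{u∈C} Σ_{v∈C} K_j(d(u,v)) ≥ 0`; equivalently, for nonempty `C` the distance
distribution `x_i := |{(u,v) ∈ C×C : d(u,v) = i}| / |C|` satisfies
`Σ_i x_i K_j(i) ≥ 0` for all `j`. -/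
theorem statement18 (q n : ℕ) (hq : 2 ≤ q) (hn : 1 ≤ n) (C : Finset (Fin n → Fin q)) :
    (∀ j ≤ n, 0 ≤ ∑ u ∈ C, ∑ v ∈ C, krawtchouk q n j (hammingDist u v)) ∧
    (C.Nonempty → ∀ j ≤ n,
      0 ≤ ∑ i ∈ Finset.range (n + 1),
            ((((C ×ˢ C).filter fun p => hammingDist p.1 p.2 = i).card : ℝ) / (C.card : ℝ)) *
              krawtchouk q n j i) := by
  classical
  have main : ∀ j : ℕ, 0 ≤ ∑ u ∈ C, ∑ v ∈ C, krawtchouk q n j (hammingDist u v) := by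
    intro j
    set W : Finset (Fin n → Fin q) := Finset.univ.filter (fun z : Fin n → Fin q =>
        (Finset.univ.filter fun h => (z h : ℕ) ≠ 0).card = j) with hW
    set E : (Fin n → Fin q) → (Fin n → Fin q) → ℂ :=
      fun u z => ∏ h, zet q ^ ((((u h : ℕ) : ℤ)) * ((z h : ℕ) : ℤ)) with hE
    have hconj : ∀ v z, (starRingEnd ℂ) (E v z)
        = ∏ h, zet q ^ (-((((v h : ℕ) : ℤ)) * ((z h : ℕ) : ℤ))) := by
      intro v z
      rw [hE, map_prod]
      refine Finset.prod_congr rfl fun h _ => ?_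
      rw [map_zpow₀, conj_zet, inv_zpow, ← zpow_neg]
    have hsplit : ∀ u v z, (∏ h, zet q ^ (((u h : ℤ) - (v h : ℤ)) * ((z h : ℕ) : ℤ)))
        = E u z * (starRingEnd ℂ) (E v z) := by
      intro u v z
      rw [hconj, hE, ← Finset.prod_mul_distrib]
      refine Finset.prod_congr rfl fun h _ => ?_
      rw [← zpow_add₀ (zet_ne_zero q)]
      congr 1
      ring
    have hcx : ((∑ u ∈ C, ∑ v ∈ C, krawtchouk q n j (hammingDist u v) : ℝ) : ℂ)
        = ((∑ z ∈ W, Complex.normSq (∑ u ∈ C, E u z) : ℝ) : ℂ) := by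
      push_cast
      calc ∑ u ∈ C, ∑ v ∈ C, ((krawtchouk q n j (hammingDist u v) : ℝ) : ℂ)
          = ∑ u ∈ C, ∑ v ∈ C, ∑ z ∈ W, E u z * (starRingEnd ℂ) (E v z) := by
            refine Finset.sum_congr rfl fun u _ => Finset.sum_congr rfl fun v _ => ?_
            rw [← key q n hq u v j]
            exact Finset.sum_congr rfl fun z _ => (hsplit u v z).symm ▸ rfl
        _ = ∑ u ∈ C, ∑ z ∈ W, ∑ v ∈ C, E u z * (starRingEnd ℂ) (E v z) :=
            Finset.sum_congr rfl fun u _ => Finset.sum_comm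
        _ = ∑ z ∈ W, ∑ u ∈ C, ∑ v ∈ C, E u z * (starRingEnd ℂ) (E v z) :=
            Finset.sum_comm
        _ = ∑ z ∈ W, (∑ u ∈ C, E u z) * (starRingEnd ℂ) (∑ v ∈ C, E v z) := by
            refine Finset.sum_congr rfl fun z _ => ?_
            rw [map_sum, Finset.sum_mul_sum]
        _ = ∑ z ∈ W, ((Complex.normSq (∑ u ∈ C, E u z) : ℝ) : ℂ) := by
            refine Finset.sum_congr rfl fun z _ => ?_
            rw [Complex.mul_conj]
    have hre : (∑ u ∈ C, ∑ v ∈ C, krawtchouk q n j (hammingDist u v))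
        = ∑ z ∈ W, Complex.normSq (∑ u ∈ C, E u z) := by
      exact_mod_cast hcx
    rw [hre]
    exact Finset.sum_nonneg fun z _ => Complex.normSq_nonneg _
  refine ⟨fun j _ => main j, fun hC j hj => ?_⟩
  have hcard : (0 : ℝ) < (C.card : ℝ) := by exact_mod_cast Finset.card_pos.mpr hC
  have hmaps : ∀ p ∈ C ×ˢ C, hammingDist p.1 p.2 ∈ Finset.range (n + 1) := by
    intro p _
    rw [Finset.mem_range, Nat.lt_succ_iff]
    calc hammingDist p.1 p.2 ≤ Fintype.card (Fin n) := hammingDist_le_card_fintype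
      _ = n := Fintype.card_fin n
  have hsum : ∑ i ∈ Finset.range (n + 1),
        ((((C ×ˢ C).filter fun p => hammingDist p.1 p.2 = i).card : ℝ) * krawtchouk q n j i)
      = ∑ u ∈ C, ∑ v ∈ C, krawtchouk q n j (hammingDist u v) := by
    rw [← Finset.sum_product']
    rw [← Finset.sum_fiberwise_of_maps_to hmaps
      (fun p : (Fin n → Fin q) × (Fin n → Fin q) => krawtchouk q n j (hammingDist p.1 p.2))]
    refine Finset.sum_congr rfl fun i _ => ?_
    rw [Finset.sum_congr rfl (fun p hp => by
      rw [(Finset.mem_filter.mp hp).2]), Finset.sum_const, nsmul_eq_mul]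
  calc (0:ℝ) ≤ (∑ u ∈ C, ∑ v ∈ C, krawtchouk q n j (hammingDist u v)) / (C.card : ℝ) :=
        div_nonneg (main j) hcard.le
    _ = ∑ i ∈ Finset.range (n + 1),
          ((((C ×ˢ C).filter fun p => hammingDist p.1 p.2 = i).card : ℝ) / (C.card : ℝ)) *
            krawtchouk q n j i := by
        rw [← hsum, Finset.sum_div]
        exact Finset.sum_congr rfl fun i _ => by ring
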